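/- Let G be a finite abelian group, H a subgroup of G, I(H) the augmentation ideal of Z[H] and J an ideal of Z[H]; set J_H := J/I(H)J, 𝒥 := J·Z[G] and 𝒥_H := 𝒥/I(H)𝒥. Then the map Z[G/H] ⊗_Z J_H → 𝒥_H sending τ ⊗ (a mod I(H)J) to the class of τ̃·a in 𝒥_H, for τ ∈ G/H with any lift τ̃ ∈ G and a ∈ J, is a well-defined isomorphism of Z[G/H]-modules. -/

import Mathlib

set_option linter.unusedSectionVars false
set_option maxHeartbeats 1000000


open TensorProduct

noncomputable section

variable {G : Type*} [CommGroup G] [Fintype G] (H : Subgroup G)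

/-- The augmentation ideal `I(H)` of the group ring `ℤ[H]`, i.e. the kernel of the ring
homomorphism `ℤ[H] → ℤ` sending each `σ ∈ H` to `1`. -/
def augIdeal : Ideal (MonoidAlgebra ℤ ↥H) :=
  RingHom.ker (MonoidAlgebra.lift ℤ ℤ ↥H 1)

/-- The natural inclusion of group rings `ℤ[H] → ℤ[G]` for a subgroup `H ≤ G`. -/
def incl : MonoidAlgebra ℤ ↥H →+* MonoidAlgebra ℤ G :=
  MonoidAlgebra.mapDomainRingHom ℤ H.subtype

/-- `J_H := J / I(H)J`, for an ideal `J` of `ℤ[H]`. -/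
abbrev JmodIJ (J : Ideal (MonoidAlgebra ℤ ↥H)) :=
  (↥J) ⧸ ((augIdeal H) • (⊤ : Submodule (MonoidAlgebra ℤ ↥H) ↥J))

/-- `𝒥 := J·ℤ[G]`, the ideal of `ℤ[G]` generated by `J`. -/
abbrev extIdeal (J : Ideal (MonoidAlgebra ℤ ↥H)) : Ideal (MonoidAlgebra ℤ G) :=
  Ideal.map (incl H) J

/-- `𝒥_H := 𝒥 / I(H)𝒥`. -/
abbrev extIdealModIJ (J : Ideal (MonoidAlgebra ℤ ↥H)) :=
  ↥(extIdeal H J) ⧸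
    ((Ideal.map (incl H) (augIdeal H)) •
      (⊤ : Submodule (MonoidAlgebra ℤ G) ↥(extIdeal H J)))

namespace Stmt6

def sec (τ : G ⧸ H) : G := Quotient.out τ

@[simp] lemma sec_spec (τ : G ⧸ H) : ((sec H τ : G) : G ⧸ H) = τ := QuotientGroup.out_eq' τ

def kpart (g : G) : ↥H := ⟨(sec H (g : G ⧸ H))⁻¹ * g, by
  rw [← QuotientGroup.eq]; simp⟩

@[simp] lemma sec_mul_kpart (g : G) : sec H (g : G ⧸ H) * (kpart H g : G) = g := by
  simp [kpart]

@[simp] lemma incl_of (σ : ↥H) :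
    incl H (MonoidAlgebra.of ℤ ↥H σ) = MonoidAlgebra.of ℤ G (σ : G) := by
  simp [incl, MonoidAlgebra.of_apply, MonoidAlgebra.mapDomainRingHom]

lemma of_sub_one_mem (σ : ↥H) : MonoidAlgebra.of ℤ ↥H σ - 1 ∈ augIdeal H := by
  simp [augIdeal, RingHom.mem_ker, map_sub]

variable (J : Ideal (MonoidAlgebra ℤ ↥H))

/-- the submodule IJ inside J -/
abbrev pIJ : Submodule (MonoidAlgebra ℤ ↥H) ↥J := (augIdeal H) • ⊤

/-- the submodule I𝒥 inside 𝒥 -/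
abbrev pIJG : Submodule (MonoidAlgebra ℤ G) ↥(extIdeal H J) :=
  (Ideal.map (incl H) (augIdeal H)) • ⊤

def elt (g : G) (a : ↥J) : ↥(extIdeal H J) :=
  ⟨MonoidAlgebra.of ℤ G g * incl H ↑a,
    Ideal.mul_mem_left _ _ (Ideal.mem_map_of_mem (incl H) a.2)⟩

@[simp] lemma elt_coe (g : G) (a : ↥J) :
    (elt H J g a : MonoidAlgebra ℤ G) = MonoidAlgebra.of ℤ G g * incl H ↑a := rfl

def eltL (g : G) : ↥J →ₗ[ℤ] ↥(extIdeal H J) :=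
  AddMonoidHom.toIntLinearMap
    { toFun := fun a => elt H J g a
      map_zero' := by
        apply Subtype.ext
        simp [elt]
      map_add' := fun a b => by
        apply Subtype.ext
        simp [elt, mul_add] }

@[simp] lemma eltL_apply (g : G) (a : ↥J) : eltL H J g a = elt H J g a := rfl

lemma elt_smul (g : G) (i : MonoidAlgebra ℤ ↥H) (a : ↥J) :
    elt H J g (i • a) = (incl H i) • elt H J g a := by
  apply Subtype.ext
  simp only [elt_coe, Submodule.coe_smul, SetLike.val_smul, smul_eq_mul, map_mul]
  ring

/-- key: the class of `elt g a` only depends on the coset of `g`. -/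
lemma mk_elt_eq {g g' : G} (h : (g : G ⧸ H) = (g' : G ⧸ H)) (a : ↥J) :
    (Submodule.Quotient.mk (elt H J g a) : extIdealModIJ H J) =
      Submodule.Quotient.mk (elt H J g' a) := by
  have hσ : g'⁻¹ * g ∈ H := by rwa [← QuotientGroup.eq, eq_comm]
  rw [Submodule.Quotient.eq]
  have key : elt H J g a - elt H J g' a =
      (incl H (MonoidAlgebra.of ℤ ↥H ⟨g'⁻¹ * g, hσ⟩ - 1)) • elt H J g' a := by
    apply Subtype.ext
    simp only [AddSubgroupClass.coe_sub, elt_coe, SetLike.val_smul, smul_eq_mul, map_sub,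
      map_one, incl_of]
    have hof : MonoidAlgebra.of ℤ G g = MonoidAlgebra.of ℤ G g' *
        MonoidAlgebra.of ℤ G ((⟨g'⁻¹ * g, hσ⟩ : ↥H) : G) := by
      rw [← map_mul]
      congr 1
      simp
    rw [hof]
    ring
  rw [key]
  exact Submodule.smul_mem_smul (Ideal.mem_map_of_mem _ (of_sub_one_mem H ⟨g'⁻¹ * g, hσ⟩)) trivial

lemma pIJ_le_ker (g : G) :
    (pIJ H J).restrictScalars ℤ ≤
      LinearMap.ker ((((pIJG H J).restrictScalars ℤ).mkQ) ∘ₗ eltL H J g) := by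
  intro x hx
  simp only [LinearMap.mem_ker, LinearMap.comp_apply, Submodule.mkQ_apply,
    Submodule.Quotient.mk_eq_zero]
  rw [Submodule.restrictScalars_mem] at hx ⊢
  refine Submodule.smul_induction_on hx ?_ ?_
  · intro i hi a _
    rw [eltL_apply, elt_smul]
    exact Submodule.smul_mem_smul (Ideal.mem_map_of_mem _ hi) trivial
  · intro x y hx hy
    rw [map_add]
    exact Submodule.add_mem _ hx hy

def fbar (g : G) : JmodIJ H J →ₗ[ℤ] extIdealModIJ H J :=
  (Submodule.liftQ ((pIJ H J).restrictScalars ℤ)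
      ((((pIJG H J).restrictScalars ℤ).mkQ) ∘ₗ (eltL H J g)) (pIJ_le_ker H J g)) ∘ₗ
    (Submodule.Quotient.restrictScalarsEquiv ℤ (pIJ H J)).symm.toLinearMap

@[simp] lemma fbar_mk (g : G) (a : ↥J) :
    fbar H J g (Submodule.Quotient.mk a) = Submodule.Quotient.mk (elt H J g a) := by
  simp [fbar, Submodule.Quotient.restrictScalarsEquiv_symm_mk]
  rfl

def F : (MonoidAlgebra ℤ (G ⧸ H)) ⊗[ℤ] (JmodIJ H J) →ₗ[ℤ] extIdealModIJ H J :=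
  TensorProduct.lift
    ((Finsupp.lift (JmodIJ H J →ₗ[ℤ] extIdealModIJ H J) ℤ (G ⧸ H)
        (fun τ => fbar H J (sec H τ))) ∘ₗ (MonoidAlgebra.coeffLinearEquiv ℤ).toLinearMap)

lemma F_single (τ : G ⧸ H) (c : ℤ) (a : ↥J) :
    F H J (MonoidAlgebra.single τ c ⊗ₜ[ℤ] Submodule.Quotient.mk a) =
      c • Submodule.Quotient.mk (elt H J (sec H τ) a) := by
  erw [F, TensorProduct.lift.tmul]
  simp [MonoidAlgebra.coeffLinearEquiv]

section Psi

abbrev KIJ : Ideal (MonoidAlgebra ℤ ↥H) := augIdeal H * J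

abbrev QH := MonoidAlgebra ℤ ↥H ⧸ (KIJ H J)

abbrev NT := MonoidAlgebra ℤ (G ⧸ H) ⊗[ℤ] QH H J

lemma coe_pIJ_mem {x : ↥J} (hx : x ∈ pIJ H J) : (x : MonoidAlgebra ℤ ↥H) ∈ KIJ H J := by
  refine Submodule.smul_induction_on hx ?_ ?_
  · intro i hi a _
    exact Ideal.mul_mem_mul hi a.2
  · intro x y hx hy
    exact add_mem hx hy

lemma pIJ_mem_of_coe {x : ↥J} (hx : (x : MonoidAlgebra ℤ ↥H) ∈ KIJ H J) : x ∈ pIJ H J := by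
  have h1 : (KIJ H J : Submodule (MonoidAlgebra ℤ ↥H) (MonoidAlgebra ℤ ↥H)) =
      Submodule.map J.subtype (pIJ H J) := by
    rw [Submodule.map_smul'', Submodule.map_subtype_top, Ideal.smul_eq_mul]
  rw [h1] at hx
  rcases hx with ⟨y, hy, hxy⟩
  rwa [show y = x from Subtype.ext hxy] at hy

def jmapH : JmodIJ H J →ₗ[MonoidAlgebra ℤ ↥H] QH H J :=
  Submodule.liftQ (pIJ H J) ((KIJ H J).mkQ ∘ₗ J.subtype) (by
    intro x hx
    simp only [LinearMap.mem_ker, LinearMap.comp_apply, Submodule.subtype_apply,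
      Submodule.mkQ_apply, Submodule.Quotient.mk_eq_zero]
    exact coe_pIJ_mem H J hx)

@[simp] lemma jmapH_mk (a : ↥J) :
    jmapH H J (Submodule.Quotient.mk a) = Submodule.Quotient.mk (a : MonoidAlgebra ℤ ↥H) := rfl

lemma jmapH_inj : Function.Injective (jmapH H J) := by
  rw [← LinearMap.ker_eq_bot]
  apply Submodule.ker_liftQ_eq_bot
  intro x hx
  simp only [LinearMap.mem_ker, LinearMap.comp_apply, Submodule.subtype_apply,
    Submodule.mkQ_apply, Submodule.Quotient.mk_eq_zero] at hx
  exact pIJ_mem_of_coe H J hx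

def jmap : JmodIJ H J →ₗ[ℤ] QH H J := (jmapH H J).restrictScalars ℤ

@[simp] lemma jmap_mk (a : ↥J) :
    jmap H J (Submodule.Quotient.mk a) = Submodule.Quotient.mk (a : MonoidAlgebra ℤ ↥H) := rfl

def iota : MonoidAlgebra ℤ (G ⧸ H) ⊗[ℤ] JmodIJ H J →ₗ[ℤ] NT H J :=
  LinearMap.lTensor _ (jmap H J)

lemma iota_inj : Function.Injective (iota H J) := by
  haveI : Module.Flat ℤ (MonoidAlgebra ℤ (G ⧸ H)) :=
    have := Module.Free.of_basis (MonoidAlgebra.basis (G ⧸ H) ℤ); inferInstance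
  exact Module.Flat.lTensor_preserves_injective_linearMap (jmap H J) (jmapH_inj H J)

def Psi : MonoidAlgebra ℤ G →ₗ[ℤ] NT H J :=
  (Finsupp.lift (NT H J) ℤ G fun g =>
    MonoidAlgebra.single ((g : G ⧸ H)) (1 : ℤ) ⊗ₜ[ℤ]
      (KIJ H J).mkQ (MonoidAlgebra.of ℤ ↥H (kpart H g))) ∘ₗ
        (MonoidAlgebra.coeffLinearEquiv ℤ).toLinearMap

lemma Psi_single (g : G) (c : ℤ) :
    Psi H J (MonoidAlgebra.single g c) =
      c • (MonoidAlgebra.single ((g : G ⧸ H)) (1 : ℤ) ⊗ₜ[ℤ]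
        (KIJ H J).mkQ (MonoidAlgebra.of ℤ ↥H (kpart H g))) := by
  simp [Psi, MonoidAlgebra.coeffLinearEquiv]

@[simp] lemma incl_single (σ : ↥H) (c : ℤ) :
    incl H (MonoidAlgebra.single σ c) = MonoidAlgebra.single (σ : G) c := by
  simp [incl, MonoidAlgebra.mapDomainRingHom]

lemma kpart_mul (g : G) (σ : ↥H) : kpart H (g * σ) = kpart H g * σ := by
  apply Subtype.ext
  show (sec H (((g * (σ : G)) : G) : G ⧸ H))⁻¹ * (g * (σ : G)) = (kpart H g : G) * (σ : G)
  rw [QuotientGroup.mk_mul_of_mem g σ.2]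
  show _ = ((sec H (g : G ⧸ H))⁻¹ * g) * (σ : G)
  rw [mul_assoc]

lemma Psi_of_incl (g : G) (a : MonoidAlgebra ℤ ↥H) :
    Psi H J (MonoidAlgebra.of ℤ G g * incl H a) =
      MonoidAlgebra.single ((g : G ⧸ H)) (1 : ℤ) ⊗ₜ[ℤ]
        (KIJ H J).mkQ (MonoidAlgebra.of ℤ ↥H (kpart H g) * a) := by
  induction a using MonoidAlgebra.induction_linear with
  | zero =>
      rw [map_zero, mul_zero, (Psi H J).map_zero, mul_zero, map_zero,
        TensorProduct.tmul_zero]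
  | add f g hf hg =>
      rw [map_add, mul_add, map_add, hf, hg, mul_add, map_add, TensorProduct.tmul_add]
  | single σ c =>
      rw [incl_single]
      rw [show MonoidAlgebra.of ℤ G g * MonoidAlgebra.single (σ : G) c
          = MonoidAlgebra.single (g * (σ : G)) c by
        rw [MonoidAlgebra.of_apply, MonoidAlgebra.single_mul_single, one_mul]]
      rw [Psi_single]
      rw [show MonoidAlgebra.of ℤ ↥H (kpart H g) * MonoidAlgebra.single σ c
          = MonoidAlgebra.single (kpart H g * σ) c by
        rw [MonoidAlgebra.of_apply, MonoidAlgebra.single_mul_single, one_mul]]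
      rw [QuotientGroup.mk_mul_of_mem g σ.2, kpart_mul]
      rw [show (MonoidAlgebra.single (kpart H g * σ) c : MonoidAlgebra ℤ ↥H)
          = c • (MonoidAlgebra.of ℤ ↥H (kpart H g * σ)) by
        rw [MonoidAlgebra.smul_of]]
      rw [map_zsmul, TensorProduct.tmul_smul]

end Psi

section Span

def SpanS (P : Ideal (MonoidAlgebra ℤ ↥H)) : Set (MonoidAlgebra ℤ G) :=
  {x | ∃ (g : G) (a : MonoidAlgebra ℤ ↥H), a ∈ P ∧ x = MonoidAlgebra.of ℤ G g * incl H a}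

lemma mul_spanS (P : Ideal (MonoidAlgebra ℤ ↥H)) (r : MonoidAlgebra ℤ G)
    {x : MonoidAlgebra ℤ G} (hx : x ∈ Submodule.span ℤ (SpanS H P)) :
    r * x ∈ Submodule.span ℤ (SpanS H P) := by
  have base : ∀ (r : MonoidAlgebra ℤ G), ∀ y ∈ SpanS H P,
      r * y ∈ Submodule.span ℤ (SpanS H P) := by
    intro r y hy
    induction r using MonoidAlgebra.induction_on with
    | of g =>
        rcases hy with ⟨g', a, ha, rfl⟩
        refine Submodule.subset_span ⟨g * g', a, ha, ?_⟩
        rw [← mul_assoc, ← map_mul]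
    | add f₁ f₂ h1 h2 => rw [add_mul]; exact Submodule.add_mem _ h1 h2
    | smul c f hf => rw [smul_mul_assoc]; exact Submodule.smul_mem _ c hf
  refine Submodule.span_induction (fun y hy => base r y hy) ?_ ?_ ?_ hx
  · rw [mul_zero]; exact Submodule.zero_mem _
  · intro y z _ _ h1 h2; rw [mul_add]; exact Submodule.add_mem _ h1 h2
  · intro c y _ h1; rw [mul_smul_comm]; exact Submodule.smul_mem _ c h1

lemma map_le_spanS (P : Ideal (MonoidAlgebra ℤ ↥H)) :
    ∀ x ∈ Ideal.map (incl H) P, x ∈ Submodule.span ℤ (SpanS H P) := by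
  intro x hx
  rw [Ideal.map] at hx
  refine Submodule.span_induction ?_ ?_ ?_ ?_ hx
  · rintro y ⟨a, ha, rfl⟩
    exact Submodule.subset_span ⟨1, a, ha, by rw [map_one, one_mul]⟩
  · exact Submodule.zero_mem _
  · intro y z _ _ h1 h2; exact Submodule.add_mem _ h1 h2
  · intro r y _ h1
    rw [smul_eq_mul]
    exact mul_spanS H P r h1

lemma Psi_IJ_zero : ∀ r ∈ Ideal.map (incl H) (augIdeal H), ∀ z ∈ extIdeal H J,
    Psi H J (r * z) = 0 := by
  have base : ∀ (g : G) (i : MonoidAlgebra ℤ ↥H), i ∈ augIdeal H →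
      ∀ z ∈ extIdeal H J, Psi H J ((MonoidAlgebra.of ℤ G g * incl H i) * z) = 0 := by
    intro g i hi z hz
    have hz' := map_le_spanS H J z hz
    refine Submodule.span_induction ?_ ?_ ?_ ?_ hz'
    · rintro y ⟨g', a, ha, rfl⟩
      rw [show (MonoidAlgebra.of ℤ G g * incl H i) * (MonoidAlgebra.of ℤ G g' * incl H a)
          = MonoidAlgebra.of ℤ G (g * g') * incl H (i * a) by
        rw [map_mul, map_mul]; ring]
      rw [Psi_of_incl]
      rw [show ((KIJ H J).mkQ) (MonoidAlgebra.of ℤ ↥H (kpart H (g * g')) * (i * a)) = 0 by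
        rw [Submodule.mkQ_apply, Submodule.Quotient.mk_eq_zero]
        exact Ideal.mul_mem_left _ _ (Ideal.mul_mem_mul hi ha)]
      rw [TensorProduct.tmul_zero]
    · rw [mul_zero, (Psi H J).map_zero]
    · intro y z _ _ h1 h2
      rw [mul_add, map_add, h1, h2, add_zero]
    · intro c y _ h1
      rw [mul_smul_comm, map_smul, h1, smul_zero]
  intro r hr z hz
  have hr' := map_le_spanS H _ r hr
  refine Submodule.span_induction ?_ ?_ ?_ ?_ hr'
  · rintro y ⟨g, i, hi, rfl⟩
    exact base g i hi z hz
  · rw [zero_mul, (Psi H J).map_zero]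
  · intro y w _ _ h1 h2
    rw [add_mul, map_add, h1, h2, add_zero]
  · intro c y _ h1
    rw [smul_mul_assoc, map_smul, h1, smul_zero]

end Span

section Phi

def PhiAux : ↥(extIdeal H J) →ₗ[ℤ] NT H J :=
  Psi H J ∘ₗ ((extIdeal H J).subtype.restrictScalars ℤ)

lemma pIJG_le_ker_PhiAux :
    (pIJG H J).restrictScalars ℤ ≤ LinearMap.ker (PhiAux H J) := by
  intro x hx
  simp only [LinearMap.mem_ker, PhiAux, LinearMap.comp_apply, LinearMap.restrictScalars_apply,
    Submodule.subtype_apply]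
  rw [Submodule.restrictScalars_mem] at hx
  refine Submodule.smul_induction_on hx ?_ ?_
  · intro r hr m _
    rw [show ((r • m : ↥(extIdeal H J)) : MonoidAlgebra ℤ G) = r * ↑m from rfl]
    exact Psi_IJ_zero H J r hr ↑m m.2
  · intro x y hx hy
    rw [Submodule.coe_add, map_add, hx, hy, add_zero]

def Phi : extIdealModIJ H J →ₗ[ℤ] NT H J :=
  (Submodule.liftQ ((pIJG H J).restrictScalars ℤ) (PhiAux H J) (pIJG_le_ker_PhiAux H J)) ∘ₗ
    (Submodule.Quotient.restrictScalarsEquiv ℤ (pIJG H J)).symm.toLinearMap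

@[simp] lemma Phi_mk (z : ↥(extIdeal H J)) :
    Phi H J (Submodule.Quotient.mk z) = Psi H J (z : MonoidAlgebra ℤ G) := by
  simp [Phi, Submodule.Quotient.restrictScalarsEquiv_symm_mk]
  rfl

lemma Phi_F (x : MonoidAlgebra ℤ (G ⧸ H) ⊗[ℤ] JmodIJ H J) :
    Phi H J (F H J x) = iota H J x := by
  induction x using TensorProduct.induction_on with
  | zero => rw [map_zero, map_zero, map_zero]
  | add x y hx hy => rw [map_add, map_add, hx, hy, map_add]
  | tmul t y =>
      obtain ⟨a, rfl⟩ := Submodule.Quotient.mk_surjective _ y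
      induction t using MonoidAlgebra.induction_linear with
      | zero => rw [TensorProduct.zero_tmul, map_zero, map_zero, map_zero]
      | add f g hf hg =>
          rw [TensorProduct.add_tmul, map_add, map_add, hf, hg, map_add]
      | single τ c =>
          rw [F_single, map_smul, Phi_mk]
          rw [show ((elt H J (sec H τ) a : ↥(extIdeal H J)) : MonoidAlgebra ℤ G)
              = MonoidAlgebra.of ℤ G (sec H τ) * incl H ↑a from rfl]
          rw [Psi_of_incl, sec_spec]
          rw [show ((KIJ H J).mkQ) (MonoidAlgebra.of ℤ ↥H (kpart H (sec H τ)) * ↑a)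
              = Submodule.Quotient.mk (a : MonoidAlgebra ℤ ↥H) by
            rw [Submodule.mkQ_apply, Submodule.Quotient.eq]
            rw [show MonoidAlgebra.of ℤ ↥H (kpart H (sec H τ)) * ↑a - ↑a
                = (MonoidAlgebra.of ℤ ↥H (kpart H (sec H τ)) - 1) * ↑a by ring]
            exact Ideal.mul_mem_mul (of_sub_one_mem H _) a.2]
          erw [iota, LinearMap.lTensor_tmul, jmap_mk]
          rw [show (MonoidAlgebra.single τ c : MonoidAlgebra ℤ (G ⧸ H))
              = c • (MonoidAlgebra.single τ (1 : ℤ)) by rw [MonoidAlgebra.smul_single, smul_eq_mul, mul_one]]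
          rw [TensorProduct.smul_tmul']

lemma F_inj : Function.Injective (F H J) := by
  intro x y hxy
  apply iota_inj H J
  rw [← Phi_F, ← Phi_F, hxy]

lemma F_surj : Function.Surjective (F H J) := by
  intro q
  obtain ⟨z, rfl⟩ := Submodule.Quotient.mk_surjective _ q
  have main : ∀ (w : MonoidAlgebra ℤ G), w ∈ Submodule.span ℤ (SpanS H J) →
      ∃ (hw2 : w ∈ extIdeal H J) (x : MonoidAlgebra ℤ (G ⧸ H) ⊗[ℤ] JmodIJ H J),
        F H J x = Submodule.Quotient.mk (⟨w, hw2⟩ : ↥(extIdeal H J)) := by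
    intro w hw
    refine Submodule.span_induction ?_ ?_ ?_ ?_ hw
    · rintro y ⟨g, a, ha, rfl⟩
      refine ⟨Ideal.mul_mem_left _ _ (Ideal.mem_map_of_mem _ ha),
        MonoidAlgebra.single ((g : G ⧸ H)) 1 ⊗ₜ[ℤ] Submodule.Quotient.mk ⟨a, ha⟩, ?_⟩
      rw [F_single, one_smul, mk_elt_eq H J (sec_spec H ((g : G ⧸ H)))]
      rfl
    · refine ⟨Submodule.zero_mem _, 0, ?_⟩
      rw [map_zero, show (⟨0, Submodule.zero_mem _⟩ : ↥(extIdeal H J)) = 0 from rfl,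
        Submodule.Quotient.mk_zero]
    · rintro y z hysp hzsp ⟨hy2, x1, hx1⟩ ⟨hz2, x2, hx2⟩
      refine ⟨Submodule.add_mem _ hy2 hz2, x1 + x2, ?_⟩
      rw [map_add, hx1, hx2]
      rw [show (⟨y + z, _⟩ : ↥(extIdeal H J)) = ⟨y, hy2⟩ + ⟨z, hz2⟩ from rfl,
        Submodule.Quotient.mk_add]
    · rintro c y hysp ⟨hy2, x1, hx1⟩
      refine ⟨Submodule.smul_of_tower_mem _ c hy2, c • x1, ?_⟩
      rw [map_smul, hx1]
      rw [show (⟨c • y, _⟩ : ↥(extIdeal H J)) = c • (⟨y, hy2⟩ : ↥(extIdeal H J)) from rfl,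
        Submodule.Quotient.mk_smul]
  obtain ⟨hw2, x, hx⟩ := main (z : MonoidAlgebra ℤ G) (map_le_spanS H J _ z.2)
  rw [show (⟨(z : MonoidAlgebra ℤ G), hw2⟩ : ↥(extIdeal H J)) = z from Subtype.ext rfl] at hx
  exact ⟨x, hx⟩

end Phi

lemma elt_smul_of (g : G) (g' : G) (a : ↥J) :
    MonoidAlgebra.of ℤ G g • elt H J g' a = elt H J (g * g') a := by
  apply Subtype.ext
  show MonoidAlgebra.of ℤ G g * (MonoidAlgebra.of ℤ G g' * incl H ↑a) = _
  rw [← mul_assoc, ← map_mul]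
  rfl

end Stmt6

/-- Let `G` be a finite abelian group, `H ≤ G`, `I(H)` the augmentation ideal
of `ℤ[H]` and `J` an ideal of `ℤ[H]`; set `J_H := J/I(H)J`, `𝒥 := J·ℤ[G]` and
`𝒥_H := 𝒥/I(H)𝒥`.  Then the map `ℤ[G/H] ⊗_ℤ J_H → 𝒥_H` sending `τ ⊗ (a mod I(H)J)` to the
class of `τ̃·a` in `𝒥_H` (for `τ ∈ G/H` with any lift `τ̃ ∈ G` and `a ∈ J`) is a well-defined
isomorphism of `ℤ[G/H]`-modules (an additive isomorphism commuting with the `G`-actions on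
the two sides). -/
theorem zgh_tensor_iso_extIdealModIJ (J : Ideal (MonoidAlgebra ℤ ↥H)) :
    ∃ e : (MonoidAlgebra ℤ (G ⧸ H)) ⊗[ℤ] (JmodIJ H J) ≃+ extIdealModIJ H J,
      (∀ (τ : G) (a : ↥J),
        e (MonoidAlgebra.of ℤ (G ⧸ H) ((τ : G ⧸ H)) ⊗ₜ[ℤ] Submodule.Quotient.mk a) =
          Submodule.Quotient.mk
            (⟨MonoidAlgebra.of ℤ G τ * incl H ↑a,
              Ideal.mul_mem_left _ _ (Ideal.mem_map_of_mem (incl H) a.2)⟩ :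
              ↥(extIdeal H J))) ∧
      (∀ (g : G) (x : (MonoidAlgebra ℤ (G ⧸ H)) ⊗[ℤ] (JmodIJ H J)),
        e (MonoidAlgebra.of ℤ (G ⧸ H) ((g : G ⧸ H)) • x) =
          MonoidAlgebra.of ℤ G g • e x) := by
  refine ⟨(LinearEquiv.ofBijective (Stmt6.F H J)
      ⟨Stmt6.F_inj H J, Stmt6.F_surj H J⟩).toAddEquiv, ?_, ?_⟩
  · intro τ a
    show Stmt6.F H J (MonoidAlgebra.of ℤ (G ⧸ H) ((τ : G ⧸ H)) ⊗ₜ[ℤ]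
      Submodule.Quotient.mk a) = _
    rw [show MonoidAlgebra.of ℤ (G ⧸ H) ((τ : G ⧸ H))
        = MonoidAlgebra.single ((τ : G ⧸ H)) (1 : ℤ) from rfl]
    rw [Stmt6.F_single, one_smul, Stmt6.mk_elt_eq H J (Stmt6.sec_spec H ((τ : G ⧸ H)))]
    rfl
  · intro g x
    show Stmt6.F H J (MonoidAlgebra.of ℤ (G ⧸ H) ((g : G ⧸ H)) • x)
      = MonoidAlgebra.of ℤ G g • Stmt6.F H J x
    induction x using TensorProduct.induction_on with
    | zero => rw [smul_zero, map_zero, smul_zero]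
    | add x y hx hy => rw [smul_add, map_add, map_add, hx, hy, smul_add]
    | tmul t y =>
        obtain ⟨a, rfl⟩ := Submodule.Quotient.mk_surjective _ y
        rw [TensorProduct.smul_tmul', smul_eq_mul]
        induction t using MonoidAlgebra.induction_linear with
        | zero => rw [mul_zero, TensorProduct.zero_tmul, map_zero, smul_zero]
        | add f₁ f₂ h1 h2 =>
            rw [mul_add, TensorProduct.add_tmul, TensorProduct.add_tmul, map_add, map_add,
              h1, h2, smul_add]
        | single τ c =>
            rw [show MonoidAlgebra.of ℤ (G ⧸ H) ((g : G ⧸ H))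
                = MonoidAlgebra.single ((g : G ⧸ H)) (1 : ℤ) from rfl]
            rw [MonoidAlgebra.single_mul_single, one_mul]
            rw [Stmt6.F_single, Stmt6.F_single]
            have hsec : ((Stmt6.sec H ((g : G ⧸ H) * τ) : G) : G ⧸ H)
                = ((g * Stmt6.sec H τ : G) : G ⧸ H) := by
              rw [Stmt6.sec_spec, QuotientGroup.mk_mul, Stmt6.sec_spec]
            rw [Stmt6.mk_elt_eq H J hsec]
            rw [← Stmt6.elt_smul_of, ← Submodule.Quotient.mk_smul]
            rw [smul_comm]
            rw [← Submodule.Quotient.mk_smul, ← Submodule.Quotient.mk_smul]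


end
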